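/- Long-range commuting LRB with α > 0: let Ψ be a commuting interaction on a finite graph Λ with ‖Ψ‖_{F_α} < ∞ where F_α(r) = (1+r)^{-α}, α > 0. Then for disjoint X, Y ⊆ Λ, A ∈ A_X, B ∈ A_Y: ‖[τ_t^Λ(A), B]‖ ≤ 4‖Ψ‖_{F_α}·‖A‖·‖B‖·|X|·|Y|·|t|·(1+dist(X,Y))^{-α}. -/

import Mathlib

noncomputable section

/-- The algebra of bounded operators on the Hilbert space `⊗_{x ∈ Λ} ℂ^q`, realized as
`EuclideanSpace ℂ (Λ → Fin q)` (tensor basis indexed by spin configurations). -/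
abbrev LatticeOp (Λ : Type*) [Fintype Λ] [DecidableEq Λ] (q : ℕ) :=
  EuclideanSpace ℂ (Λ → Fin q) →L[ℂ] EuclideanSpace ℂ (Λ → Fin q)

variable {Λ : Type*} [Fintype Λ] [DecidableEq Λ] {q : ℕ}

/-- Matrix entry of an operator in the tensor-product (configuration) basis. -/
def entry (A : LatticeOp Λ q) (f g : Λ → Fin q) : ℂ :=
  @inner ℂ _ _ (EuclideanSpace.single f (1 : ℂ)) (A (EuclideanSpace.single g (1 : ℂ)))

/-- `A ∈ 𝒜_X`: the operator `A` acts as `A' ⊗ 1` for an operator `A'` on `⊗_{x ∈ X} ℂ^q`,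
i.e. its matrix elements are diagonal outside `X` and depend only on the restriction to `X`. -/
def IsSupportedOn (X : Finset Λ) (A : LatticeOp Λ q) : Prop :=
  ∃ M : (Λ → Fin q) → (Λ → Fin q) → ℂ,
    (∀ f g f' g' : Λ → Fin q, (∀ i ∈ X, f i = f' i) → (∀ i ∈ X, g i = g' i) → M f g = M f' g') ∧
    ∀ f g : Λ → Fin q, entry A f g = if ∀ i ∉ X, f i = g i then M f g else 0

/-- Heisenberg evolution `τ_t(A) = e^{itH} A e^{-itH}`. -/
def heis (H : LatticeOp Λ q) (t : ℝ) (A : LatticeOp Λ q) : LatticeOp Λ q :=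
  NormedSpace.exp ((Complex.I * (t : ℂ)) • H) * A *
    NormedSpace.exp (-(Complex.I * (t : ℂ)) • H)

/-- The Hamiltonian `H_Λ = Σ_{Z ⊆ Λ} Ψ(Z)`. -/
def hamiltonian (Ψ : Finset Λ → LatticeOp Λ q) : LatticeOp Λ q :=
  ∑ Z : Finset Λ, Ψ Z

/-- An interaction: each `Ψ(Z)` is self-adjoint and supported in `Z`. -/
def IsInteraction (Ψ : Finset Λ → LatticeOp Λ q) : Prop :=
  ∀ Z : Finset Λ, IsSelfAdjoint (Ψ Z) ∧ IsSupportedOn Z (Ψ Z)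

/-- A commuting interaction: all terms pairwise commute. -/
def IsCommutingInteraction (Ψ : Finset Λ → LatticeOp Λ q) : Prop :=
  IsInteraction Ψ ∧ ∀ Z Z' : Finset Λ, Commute (Ψ Z) (Ψ Z')

lemma expand_vec (y : EuclideanSpace ℂ (Λ → Fin q)) :
    ∑ h : Λ → Fin q, (@inner ℂ _ _ (EuclideanSpace.single h (1:ℂ)) y) • EuclideanSpace.single h (1:ℂ) = y := by
  have := (EuclideanSpace.basisFun (Λ → Fin q) ℂ).sum_repr' y
  simpa [EuclideanSpace.basisFun_apply] using this

lemma apply_single_eq_sum (A : LatticeOp Λ q) (g : Λ → Fin q) :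
    A (EuclideanSpace.single g (1:ℂ)) =
      ∑ h : Λ → Fin q, entry A h g • EuclideanSpace.single h (1:ℂ) :=
  (expand_vec _).symm

lemma op_ext {A B : LatticeOp Λ q} (h : ∀ f g, entry A f g = entry B f g) : A = B := by
  apply ContinuousLinearMap.ext
  intro y
  rw [← expand_vec y, map_sum, map_sum]
  refine Finset.sum_congr rfl fun g _ => ?_
  rw [map_smul, map_smul, apply_single_eq_sum A, apply_single_eq_sum B]
  exact congrArg _ (Finset.sum_congr rfl fun f _ => by rw [h f g])

lemma entry_mul (A B : LatticeOp Λ q) (f g : Λ → Fin q) :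
    entry (A * B) f g = ∑ h : Λ → Fin q, entry A f h * entry B h g := by
  have : (A * B) (EuclideanSpace.single g (1:ℂ)) = A (B (EuclideanSpace.single g (1:ℂ))) :=
    ContinuousLinearMap.mul_apply A B _
  rw [entry, this, apply_single_eq_sum B, map_sum, inner_sum]
  refine Finset.sum_congr rfl fun h _ => ?_
  rw [map_smul, inner_smul_right, mul_comm]
  rfl


/-- The single-term evaluation of `entry (A*B)` for supported operators. -/
lemma entry_mul_supported {X Y : Finset Λ} (hXY : Disjoint X Y)
    {MA MB : (Λ → Fin q) → (Λ → Fin q) → ℂ} {A B : LatticeOp Λ q}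
    (hEA : ∀ f g, entry A f g = if ∀ i ∉ X, f i = g i then MA f g else 0)
    (hEB : ∀ f g, entry B f g = if ∀ i ∉ Y, f i = g i then MB f g else 0)
    (f g : Λ → Fin q) :
    entry (A * B) f g =
      if ∀ i, i ∉ X → i ∉ Y → f i = g i then
        MA f (X.piecewise g f) * MB (X.piecewise g f) g else 0 := by
  classical
  rw [entry_mul]
  have hzero : ∀ h : Λ → Fin q, ¬ ((∀ i ∉ X, f i = h i) ∧ (∀ i ∉ Y, h i = g i)) →
      entry A f h * entry B h g = 0 := by
    intro h hnot
    rw [hEA, hEB]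
    by_cases hp1 : ∀ i ∉ X, f i = h i
    · by_cases hp2 : ∀ i ∉ Y, h i = g i
      · exact absurd ⟨hp1, hp2⟩ hnot
      · rw [if_neg hp2, mul_zero]
    · rw [if_neg hp1, zero_mul]
  by_cases hc : ∀ i, i ∉ X → i ∉ Y → f i = g i
  · rw [if_pos hc]
    have hP1 : ∀ i ∉ X, f i = X.piecewise g f i :=
      fun i hi => (X.piecewise_eq_of_notMem _ _ hi).symm
    have hP2 : ∀ i ∉ Y, X.piecewise g f i = g i := by
      intro i hi
      by_cases hx : i ∈ X
      · exact X.piecewise_eq_of_mem _ _ hx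
      · rw [X.piecewise_eq_of_notMem _ _ hx]; exact hc i hx hi
    rw [Finset.sum_eq_single (X.piecewise g f)]
    · rw [hEA, hEB, if_pos hP1, if_pos hP2]
    · intro h _ hne
      refine hzero h fun ⟨hp1, hp2⟩ => hne (funext fun i => ?_)
      by_cases hx : i ∈ X
      · have hy : i ∉ Y := Finset.disjoint_left.1 hXY hx
        rw [X.piecewise_eq_of_mem _ _ hx]; exact hp2 i hy
      · rw [X.piecewise_eq_of_notMem _ _ hx]; exact (hp1 i hx).symm
    · intro habs; exact absurd (Finset.mem_univ _) habs
  · rw [if_neg hc]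
    refine Finset.sum_eq_zero fun h _ => hzero h fun ⟨hp1, hp2⟩ =>
      hc fun i hx hy => (hp1 i hx).trans (hp2 i hy)

lemma commute_of_disjoint {X Y : Finset Λ} (hXY : Disjoint X Y)
    {A B : LatticeOp Λ q} (hA : IsSupportedOn X A) (hB : IsSupportedOn Y B) :
    Commute A B := by
  classical
  obtain ⟨MA, hMA, hEA⟩ := hA
  obtain ⟨MB, hMB, hEB⟩ := hB
  show A * B = B * A
  refine op_ext fun f g => ?_
  rw [entry_mul_supported hXY hEA hEB, entry_mul_supported hXY.symm hEB hEA]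
  have hiff : (∀ i, i ∉ X → i ∉ Y → f i = g i) ↔ (∀ i, i ∉ Y → i ∉ X → f i = g i) :=
    ⟨fun h i hy hx => h i hx hy, fun h i hx hy => h i hy hx⟩
  by_cases hc : ∀ i, i ∉ X → i ∉ Y → f i = g i
  · rw [if_pos hc, if_pos (hiff.1 hc)]
    have e1 : MA f (X.piecewise g f) = MA (Y.piecewise g f) g := by
      refine hMA _ _ _ _ (fun i hi => ?_) (fun i hi => ?_)
      · rw [Y.piecewise_eq_of_notMem _ _ (Finset.disjoint_left.1 hXY hi)]
      · exact X.piecewise_eq_of_mem _ _ hi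
    have e2 : MB (X.piecewise g f) g = MB f (Y.piecewise g f) := by
      refine hMB _ _ _ _ (fun i hi => ?_) (fun i hi => ?_)
      · exact X.piecewise_eq_of_notMem _ _ (Finset.disjoint_right.1 hXY hi)
      · exact (Y.piecewise_eq_of_mem _ _ hi).symm
    rw [e1, e2]; ring
  · rw [if_neg hc, if_neg (fun h => hc (hiff.2 h))]


open NormedSpace Complex in
lemma norm_exp_selfAdjoint [Nontrivial (LatticeOp Λ q)] {H : LatticeOp Λ q}
    (hH : IsSelfAdjoint H) (c : ℝ) :
    ‖NormedSpace.exp ((Complex.I * (c : ℂ)) • H)‖ = 1 := by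
  have h1 : IsSelfAdjoint ((c : ℂ) • H) := by
    rw [IsSelfAdjoint, star_smul, hH.star_eq, Complex.star_def, Complex.conj_ofReal]
  have := CStarRing.norm_coe_unitary (selfAdjoint.expUnitary (⟨(c : ℂ) • H, h1⟩ : selfAdjoint (LatticeOp Λ q)))
  simpa [selfAdjoint.expUnitary, smul_smul] using this

open NormedSpace Complex in
lemma norm_exp_selfAdjoint_neg [Nontrivial (LatticeOp Λ q)] {H : LatticeOp Λ q}
    (hH : IsSelfAdjoint H) (c : ℝ) :
    ‖NormedSpace.exp ((-(Complex.I * (c : ℂ))) • H)‖ = 1 := by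
  have heq : ((-(Complex.I * (c : ℂ))) • H) = (Complex.I * ((-c : ℝ) : ℂ)) • H := by
    congr 1; push_cast; ring
  rw [heq]; exact norm_exp_selfAdjoint hH (-c)

set_option maxHeartbeats 1000000 in
open NormedSpace Complex in
lemma norm_exp_sub_one_le [Nontrivial (LatticeOp Λ q)] {H : LatticeOp Λ q}
    (hH : IsSelfAdjoint H) (c : ℝ) :
    ‖NormedSpace.exp ((Complex.I * (c : ℂ)) • H) - 1‖ ≤ |c| * ‖H‖ := by
  set x : LatticeOp Λ q := (Complex.I * (c : ℂ)) • H with hx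
  have hderiv : ∀ s ∈ Set.Icc (0:ℝ) 1,
      HasDerivWithinAt (fun s : ℝ => NormedSpace.exp (((s : ℂ)) • x))
        (NormedSpace.exp (((s : ℂ)) • x) * x) (Set.Icc (0:ℝ) 1) s := 
    by
    intro s _
    have h1 := HasDerivAt.scomp (𝕜 := ℝ) s
      (hasDerivAt_exp_smul_const (𝕂 := ℂ) x (s : ℂ)) Complex.ofRealCLM.hasDerivAt
    have h2 : HasDerivAt (fun s : ℝ => NormedSpace.exp (((s : ℂ)) • x))
        (NormedSpace.exp (((s : ℂ)) • x) * x) s := by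
      have h3 : Complex.ofRealCLM 1 • (NormedSpace.exp (((s : ℂ)) • x) * x) =
          NormedSpace.exp (((s : ℂ)) • x) * x := by simp
      rw [h3] at h1
      exact h1
    exact h2.hasDerivWithinAt
  have hbound : ∀ s ∈ Set.Icc (0:ℝ) 1,
      ‖NormedSpace.exp (((s : ℂ)) • x) * x‖ ≤ |c| * ‖H‖ := by
    intro s _
    have h1 : ((s : ℂ)) • x = (Complex.I * ((s * c : ℝ) : ℂ)) • H := by
      rw [hx, smul_smul]; push_cast; ring_nf
    have h2 : ‖x‖ = |c| * ‖H‖ := by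
      rw [hx, norm_smul (Complex.I * (c : ℂ)) H, norm_mul, Complex.norm_I, one_mul, Complex.norm_real,
        Real.norm_eq_abs]
    calc ‖NormedSpace.exp (((s : ℂ)) • x) * x‖
        ≤ ‖NormedSpace.exp (((s : ℂ)) • x)‖ * ‖x‖ := norm_mul_le _ _
      _ = |c| * ‖H‖ := by rw [h1, norm_exp_selfAdjoint hH, one_mul, h2]
  have key := Convex.norm_image_sub_le_of_norm_hasDerivWithin_le hderiv hbound
    (convex_Icc 0 1) (Set.mem_Icc.2 ⟨le_refl 0, zero_le_one⟩)
    (Set.mem_Icc.2 ⟨zero_le_one, le_refl 1⟩)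
  simpa [NormedSpace.exp_zero, zero_smul ℂ x, one_smul ℂ x, Complex.ofReal_zero, Complex.ofReal_one] using key


open NormedSpace in
lemma norm_exp_sub_one_le_neg [Nontrivial (LatticeOp Λ q)] {H : LatticeOp Λ q}
    (hH : IsSelfAdjoint H) (c : ℝ) :
    ‖NormedSpace.exp ((-(Complex.I * (c : ℂ))) • H) - 1‖ ≤ |c| * ‖H‖ := by
  have heq : ((-(Complex.I * (c : ℂ))) • H) = (Complex.I * ((-c : ℝ) : ℂ)) • H := by
    congr 1; push_cast; ring
  rw [heq]
  simpa [abs_neg] using norm_exp_sub_one_le hH (-c)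

open NormedSpace in
lemma exp_conj_commute_eq (u : ℂ) {K A : LatticeOp Λ q} (h : Commute K A) :
    NormedSpace.exp (u • K) * A * NormedSpace.exp ((-u) • K) = A := by
  let +nondep : NormedAlgebra ℚ (LatticeOp Λ q) := .restrictScalars ℚ ℂ _
  have hc : Commute (NormedSpace.exp (u • K)) A := Commute.exp_left (h.smul_left u)
  rw [hc.eq, mul_assoc,
    ← exp_add_of_commute (((Commute.refl K).smul_left u).smul_right (-u)),
    show u • K + (-u) • K = 0 by rw [← add_smul u (-u) K]; simp, exp_zero, mul_one]

open NormedSpace in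
lemma heis_split (K L A : LatticeOp Λ q) (t : ℝ) (hKL : Commute K L) :
    heis (K + L) t A =
      NormedSpace.exp ((Complex.I * (t : ℂ)) • K) * heis L t A *
        NormedSpace.exp ((-(Complex.I * (t : ℂ))) • K) := by
  let +nondep : NormedAlgebra ℚ (LatticeOp Λ q) := .restrictScalars ℚ ℂ _
  set u : ℂ := Complex.I * (t : ℂ) with hu
  have hc : Commute (u • K) (u • L) := (hKL.smul_left u).smul_right u
  have hc' : Commute ((-u) • L) ((-u) • K) := (hKL.symm.smul_left (-u)).smul_right (-u)
  have e1 : u • (K + L) = u • K + u • L := smul_add u K L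
  have e2 : (-u) • (K + L) = (-u) • L + (-u) • K := by rw [smul_add]; exact add_comm _ _
  show NormedSpace.exp (u • (K + L)) * A * NormedSpace.exp ((-u) • (K + L)) = _
  rw [e1, exp_add_of_commute hc, e2, exp_add_of_commute hc']
  show _ = exp (u • K) * (exp (u • L) * A * exp ((-u) • L)) * exp ((-u) • K)
  simp only [mul_assoc]


set_option maxHeartbeats 2000000 in
/-- Long-range commuting Lieb-Robinson bound (`α > 0`): if `‖Ψ‖_{F_α} ≤ N` with
`F_α(r) = (1+r)^{-α}`, then for disjoint `X, Y` and `A ∈ 𝒜_X`, `B ∈ 𝒜_Y`,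
`‖[τ_t^Λ(A), B]‖ ≤ 4 N ‖A‖ ‖B‖ |X| |Y| |t| (1 + dist(X,Y))^{-α}`. -/
theorem long_range_commuting_lrb [MetricSpace Λ]
    (Ψ : Finset Λ → LatticeOp Λ q) (hΨ : IsCommutingInteraction Ψ)
    (α : ℝ) (hα : 0 < α) (N : ℝ)
    (hN : ∀ x y : Λ,
      ∑ Z ∈ Finset.univ.filter (fun Z : Finset Λ => x ∈ Z ∧ y ∈ Z), ‖Ψ Z‖ ≤
        N * (1 + dist x y) ^ (-α))
    (X Y : Finset Λ) (hX : X.Nonempty) (hY : Y.Nonempty) (hXY : Disjoint X Y)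
    (A B : LatticeOp Λ q) (hA : IsSupportedOn X A) (hB : IsSupportedOn Y B) (t : ℝ) :
    ‖heis (hamiltonian Ψ) t A * B - B * heis (hamiltonian Ψ) t A‖ ≤
      4 * N * ‖A‖ * ‖B‖ * (X.card : ℝ) * (Y.card : ℝ) * |t| *
        (1 + (X ×ˢ Y).inf' (hX.product hY) (fun p => dist p.1 p.2)) ^ (-α) := by
  classical
  obtain ⟨hint, hcom⟩ := hΨ
  set D : ℝ := (X ×ˢ Y).inf' (hX.product hY) (fun p => dist p.1 p.2) with hDdef
  have hD0 : 0 ≤ D := Finset.le_inf' _ _ (fun p _ => dist_nonneg)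
  have h1D : (0:ℝ) < 1 + D := by linarith
  obtain ⟨x₀, hx₀⟩ := hX
  obtain ⟨y₀, hy₀⟩ := hY
  have hN0 : 0 ≤ N := by
    have h := hN x₀ y₀
    have hpos : (0:ℝ) < (1 + dist x₀ y₀) ^ (-α) :=
      Real.rpow_pos_of_pos (by have := dist_nonneg (x := x₀) (y := y₀); linarith) _
    have hsum : (0:ℝ) ≤ ∑ Z ∈ Finset.univ.filter (fun Z : Finset Λ => x₀ ∈ Z ∧ y₀ ∈ Z), ‖Ψ Z‖ :=
      Finset.sum_nonneg fun _ _ => norm_nonneg _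
    exact (mul_nonneg_iff_of_pos_right hpos).1 (hsum.trans h)
  have hrpow0 : (0:ℝ) ≤ (1 + D) ^ (-α) := (Real.rpow_pos_of_pos h1D _).le
  have hRHS0 : (0:ℝ) ≤ 4 * N * ‖A‖ * ‖B‖ * (X.card : ℝ) * (Y.card : ℝ) * |t| * (1 + D) ^ (-α) := by
    have : (0:ℝ) ≤ 4 * N * ‖A‖ * ‖B‖ * (X.card : ℝ) * (Y.card : ℝ) * |t| := by positivity
    exact mul_nonneg this hrpow0
  rcases subsingleton_or_nontrivial (EuclideanSpace ℂ (Λ → Fin q)) with hss | hnt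
  · have hzero : heis (hamiltonian Ψ) t A * B - B * heis (hamiltonian Ψ) t A = 0 := by
      apply ContinuousLinearMap.ext; intro v; exact Subsingleton.elim _ _
    rw [hzero, norm_zero]
    exact hRHS0
  have hnt' : Nontrivial (LatticeOp Λ q) := by
    obtain ⟨v, hv⟩ := exists_ne (0 : EuclideanSpace ℂ (Λ → Fin q))
    exact ⟨1, 0, fun h => hv (by simpa using DFunLike.congr_fun h v)⟩
  -- Hamiltonian splitting
  set S1 := Finset.univ.filter (fun Z : Finset Λ => ¬ Disjoint Z X ∧ ¬ Disjoint Z Y) with hS1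
  set H1 := ∑ Z ∈ S1, Ψ Z with hH1def
  set H2 := ∑ Z ∈ Finset.univ.filter (fun Z : Finset Λ => ¬ Disjoint Z X ∧ Disjoint Z Y), Ψ Z with hH2def
  set H3 := ∑ Z ∈ Finset.univ.filter (fun Z : Finset Λ => Disjoint Z X), Ψ Z with hH3def
  have hsplit : hamiltonian Ψ = H1 + (H2 + H3) := by
    have e1 := (Finset.sum_filter_add_sum_filter_not Finset.univ
      (fun Z : Finset Λ => Disjoint Z X) Ψ).symm
    have e2 := (Finset.sum_filter_add_sum_filter_not
      (Finset.univ.filter (fun Z : Finset Λ => ¬ Disjoint Z X))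
      (fun Z : Finset Λ => Disjoint Z Y) Ψ).symm
    rw [hamiltonian, e1, e2, Finset.filter_filter, Finset.filter_filter]
    rw [← hS1, ← hH1def, ← hH2def, ← hH3def]
    abel
  -- commutation facts
  have cAB : Commute A B := commute_of_disjoint hXY hA hB
  have c12 : Commute H1 H2 := Commute.sum_left _ _ _ fun Z _ =>
    Commute.sum_right _ _ _ fun Z' _ => hcom Z Z'
  have c13 : Commute H1 H3 := Commute.sum_left _ _ _ fun Z _ =>
    Commute.sum_right _ _ _ fun Z' _ => hcom Z Z'
  have c23 : Commute H2 H3 := Commute.sum_left _ _ _ fun Z _ =>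
    Commute.sum_right _ _ _ fun Z' _ => hcom Z Z'
  have cH1_23 : Commute H1 (H2 + H3) := c12.add_right c13
  have cH3A : Commute H3 A := Commute.sum_left _ _ _ fun Z hZ => by
    have hd : Disjoint Z X := (Finset.mem_filter.1 hZ).2
    exact commute_of_disjoint hd (hint Z).2 hA
  have cH2B : Commute H2 B := Commute.sum_left _ _ _ fun Z hZ => by
    have hd : Disjoint Z Y := (Finset.mem_filter.1 hZ).2.2
    exact commute_of_disjoint hd (hint Z).2 hB
  have hsa1 : IsSelfAdjoint H1 :=
    Finset.sum_induction _ _ (fun a b ha hb => IsSelfAdjoint.add (R := LatticeOp Λ q) ha hb) (IsSelfAdjoint.zero (LatticeOp Λ q))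
      (fun Z _ => (hint Z).1)
  have hsa2 : IsSelfAdjoint H2 :=
    Finset.sum_induction _ _ (fun a b ha hb => IsSelfAdjoint.add (R := LatticeOp Λ q) ha hb) (IsSelfAdjoint.zero (LatticeOp Λ q))
      (fun Z _ => (hint Z).1)
  -- the key factorization
  set u : ℂ := Complex.I * (t : ℂ) with hu
  set E1 := NormedSpace.exp (u • H1) with hE1def
  set E1' := NormedSpace.exp ((-u) • H1) with hE1'def
  set A2 := NormedSpace.exp (u • H2) * A * NormedSpace.exp ((-u) • H2) with hA2def
  have key : heis (hamiltonian Ψ) t A = E1 * A2 * E1' := by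
    rw [hsplit, heis_split _ _ _ _ cH1_23, heis_split _ _ _ _ c23]
    have h3 : heis H3 t A = A := exp_conj_commute_eq (Complex.I * (t : ℂ)) cH3A
    rw [h3]
  -- commutation of A2 with B
  have cA2B : Commute A2 B := by
    have h1 : Commute (NormedSpace.exp (u • H2)) B := Commute.exp_left (cH2B.smul_left u)
    have h2 : Commute (NormedSpace.exp ((-u) • H2)) B := Commute.exp_left (cH2B.smul_left (-u))
    rw [hA2def]
    exact (h1.mul_left cAB).mul_left h2
  -- norms
  have hE1n : ‖E1 - 1‖ ≤ |t| * ‖H1‖ := by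
    rw [hE1def, hu]; exact norm_exp_sub_one_le hsa1 t
  have hE1'n : ‖E1' - 1‖ ≤ |t| * ‖H1‖ := by
    rw [hE1'def, hu]; exact norm_exp_sub_one_le_neg hsa1 t
  have hE1'1 : ‖E1'‖ = 1 := by
    rw [hE1'def, hu]; exact norm_exp_selfAdjoint_neg hsa1 t
  have hA2n : ‖A2‖ ≤ ‖A‖ := by
    rw [hA2def]
    calc ‖NormedSpace.exp (u • H2) * A * NormedSpace.exp ((-u) • H2)‖
        ≤ ‖NormedSpace.exp (u • H2) * A‖ * ‖NormedSpace.exp ((-u) • H2)‖ := norm_mul_le _ _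
      _ ≤ ‖NormedSpace.exp (u • H2)‖ * ‖A‖ * ‖NormedSpace.exp ((-u) • H2)‖ :=
          mul_le_mul_of_nonneg_right (norm_mul_le _ _) (norm_nonneg _)
      _ = ‖A‖ := by
          rw [hu, norm_exp_selfAdjoint hsa2 t, norm_exp_selfAdjoint_neg hsa2 t, one_mul, mul_one]
  -- the difference bound
  set T := heis (hamiltonian Ψ) t A with hT
  have hdiff : T - A2 = (E1 - 1) * A2 * E1' + A2 * (E1' - 1) := by
    rw [key, sub_mul, one_mul, sub_mul, mul_sub, mul_one]; abel
  have hTd : ‖T - A2‖ ≤ 2 * (|t| * ‖H1‖) * ‖A‖ := by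
    rw [hdiff]
    have b1 : ‖(E1 - 1) * A2 * E1'‖ ≤ (|t| * ‖H1‖) * ‖A‖ := by
      calc ‖(E1 - 1) * A2 * E1'‖ ≤ ‖(E1 - 1) * A2‖ * ‖E1'‖ := norm_mul_le _ _
        _ = ‖(E1 - 1) * A2‖ := by rw [hE1'1, mul_one]
        _ ≤ ‖E1 - 1‖ * ‖A2‖ := norm_mul_le _ _
        _ ≤ (|t| * ‖H1‖) * ‖A‖ :=
            mul_le_mul hE1n hA2n (norm_nonneg _) (by positivity)
    have b2 : ‖A2 * (E1' - 1)‖ ≤ ‖A‖ * (|t| * ‖H1‖) := by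
      calc ‖A2 * (E1' - 1)‖ ≤ ‖A2‖ * ‖E1' - 1‖ := norm_mul_le _ _
        _ ≤ ‖A‖ * (|t| * ‖H1‖) := mul_le_mul hA2n hE1'n (norm_nonneg _) (norm_nonneg _)
    calc ‖(E1 - 1) * A2 * E1' + A2 * (E1' - 1)‖
        ≤ ‖(E1 - 1) * A2 * E1'‖ + ‖A2 * (E1' - 1)‖ := norm_add_le _ _
      _ ≤ (|t| * ‖H1‖) * ‖A‖ + ‖A‖ * (|t| * ‖H1‖) := add_le_add b1 b2
      _ = 2 * (|t| * ‖H1‖) * ‖A‖ := by ring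
  have hmain : T * B - B * T = (T - A2) * B - B * (T - A2) := by
    rw [sub_mul, mul_sub, cA2B.eq]; abel
  have hLHS : ‖T * B - B * T‖ ≤ 4 * ‖A‖ * ‖B‖ * |t| * ‖H1‖ := by
    rw [hmain]
    calc ‖(T - A2) * B - B * (T - A2)‖
        ≤ ‖(T - A2) * B‖ + ‖B * (T - A2)‖ := norm_sub_le _ _
      _ ≤ ‖T - A2‖ * ‖B‖ + ‖B‖ * ‖T - A2‖ := add_le_add (norm_mul_le _ _) (norm_mul_le _ _)
      _ ≤ (2 * (|t| * ‖H1‖) * ‖A‖) * ‖B‖ + ‖B‖ * (2 * (|t| * ‖H1‖) * ‖A‖) :=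
          add_le_add (mul_le_mul_of_nonneg_right hTd (norm_nonneg _))
            (mul_le_mul_of_nonneg_left hTd (norm_nonneg _))
      _ = 4 * ‖A‖ * ‖B‖ * |t| * ‖H1‖ := by ring
  -- bound on ‖H1‖
  have hH1bound : ‖H1‖ ≤ (X.card : ℝ) * (Y.card : ℝ) * (N * (1 + D) ^ (-α)) := by
    have hterm : ∀ Z ∈ S1, ‖Ψ Z‖ ≤
        ∑ p ∈ X ×ˢ Y, (if p.1 ∈ Z ∧ p.2 ∈ Z then ‖Ψ Z‖ else 0) := by
      intro Z hZ
      obtain ⟨-, h1, h2⟩ := Finset.mem_filter.1 hZ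
      obtain ⟨x1, hx1Z, hx1X⟩ := Finset.not_disjoint_iff.1 h1
      obtain ⟨y1, hy1Z, hy1Y⟩ := Finset.not_disjoint_iff.1 h2
      have hmem : ((x1, y1) : Λ × Λ) ∈ X ×ˢ Y := Finset.mem_product.2 ⟨hx1X, hy1Y⟩
      have := Finset.single_le_sum
        (f := fun p : Λ × Λ => if p.1 ∈ Z ∧ p.2 ∈ Z then ‖Ψ Z‖ else 0)
        (fun p _ => by split <;> [exact norm_nonneg _; exact le_refl 0]) hmem
      simpa [hx1Z, hy1Z] using this
    calc ‖H1‖ ≤ ∑ Z ∈ S1, ‖Ψ Z‖ := norm_sum_le _ _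
      _ ≤ ∑ Z ∈ S1, ∑ p ∈ X ×ˢ Y, (if p.1 ∈ Z ∧ p.2 ∈ Z then ‖Ψ Z‖ else 0) :=
          Finset.sum_le_sum hterm
      _ ≤ ∑ Z : Finset Λ, ∑ p ∈ X ×ˢ Y, (if p.1 ∈ Z ∧ p.2 ∈ Z then ‖Ψ Z‖ else 0) := by
          refine Finset.sum_le_sum_of_subset_of_nonneg (Finset.filter_subset _ _)
            fun Z _ _ => Finset.sum_nonneg fun p _ => ?_
          split <;> [exact norm_nonneg _; exact le_refl 0]
      _ = ∑ p ∈ X ×ˢ Y, ∑ Z : Finset Λ, (if p.1 ∈ Z ∧ p.2 ∈ Z then ‖Ψ Z‖ else 0) :=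
          Finset.sum_comm
      _ = ∑ p ∈ X ×ˢ Y, ∑ Z ∈ Finset.univ.filter (fun Z : Finset Λ => p.1 ∈ Z ∧ p.2 ∈ Z), ‖Ψ Z‖ :=
          Finset.sum_congr rfl fun p _ => (Finset.sum_filter _ _).symm
      _ ≤ ∑ _p ∈ X ×ˢ Y, N * (1 + D) ^ (-α) := by
          refine Finset.sum_le_sum fun p hp => (hN p.1 p.2).trans ?_
          refine mul_le_mul_of_nonneg_left ?_ hN0
          refine Real.rpow_le_rpow_of_nonpos h1D ?_ (by linarith)
          have : D ≤ dist p.1 p.2 := Finset.inf'_le _ hp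
          linarith
      _ = (X.card : ℝ) * (Y.card : ℝ) * (N * (1 + D) ^ (-α)) := by
          rw [Finset.sum_const, Finset.card_product, nsmul_eq_mul]
          push_cast; ring
  -- conclusion
  calc ‖T * B - B * T‖ ≤ 4 * ‖A‖ * ‖B‖ * |t| * ‖H1‖ := hLHS
    _ ≤ 4 * ‖A‖ * ‖B‖ * |t| * ((X.card : ℝ) * (Y.card : ℝ) * (N * (1 + D) ^ (-α))) := by
        refine mul_le_mul_of_nonneg_left hH1bound (by positivity)
    _ = 4 * N * ‖A‖ * ‖B‖ * (X.card : ℝ) * (Y.card : ℝ) * |t| * (1 + D) ^ (-α) := by ring
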